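/- Fix integers k ≥ 1 and n > k, and any m ≥ 1 and type distributions G over m types for n agents. Then the infimum over all m' ≥ 1 and all type distributions G' over m' types for n agents of sup_{J'∈{1,...,m'}, ρ'∈(0,1]} innerLP^{OST(J',ρ')/Proph}_{k,n}(G') is at most sup_{J∈{1,...,m}, ρ∈(0,1]} min{ P(Σ_{i=1}^{n-1} X_i(J,ρ) < k), E[min{Σ_{i=1}^{n-1} X_i(J,ρ), k}]/k }, where X_1(J,ρ), ..., X_{n-1}(J,ρ) are independent Bernoulli random variables with success probabilities τ_i(J,ρ) = (1-ρ)·G_{i,J-1} + ρ·G_{iJ}. -/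

import Mathlib

open Finset

/-- The polytope `P(k,n)` of state/acceptance probability vectors. -/
def memP (k n : ℕ) (x y : ℕ → ℕ → ℝ) : Prop :=
  x 1 k = 1 ∧
  (∀ l, 1 ≤ l → l < k → x 1 l = 0) ∧
  (∀ i ∈ Finset.Icc 2 n, ∀ l ∈ Finset.Icc 1 k,
    x i l = x (i-1) l - y (i-1) l + (if l < k then y (i-1) (l+1) else 0)) ∧
  (∀ i ∈ Finset.Icc 1 n, ∀ l ∈ Finset.Icc 1 k, 0 ≤ y i l ∧ y i l ≤ x i l)

/-- `G` is a valid family of type distributions over `m` types for `n` agents. -/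
def IsTypeDist (n m : ℕ) (G : ℕ → ℕ → ℝ) : Prop :=
  ∀ i ∈ Finset.Icc 1 n, G i 0 = 0 ∧ G i m = 1 ∧ ∀ j ∈ Finset.Icc 1 m, G i (j-1) ≤ G i j

/-- `E[min{X_1+...+X_t, k}]` for independent Bernoulli `X_i` with success probabilities `p i`. -/
noncomputable def eMinBer (p : ℕ → ℝ) (t k : ℕ) : ℝ :=
  ∑ S ∈ (Finset.Icc 1 t).powerset,
    (∏ i ∈ S, p i) * (∏ i ∈ Finset.Icc 1 t \ S, (1 - p i)) * min (S.card : ℝ) (k : ℝ)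

/-- `P(X_1+...+X_t < k)` for independent Bernoulli `X_i` with success probabilities `p i`. -/
noncomputable def probLt (p : ℕ → ℝ) (t k : ℕ) : ℝ :=
  ∑ S ∈ (Finset.Icc 1 t).powerset.filter (fun S => S.card < k),
    (∏ i ∈ S, p i) * ∏ i ∈ Finset.Icc 1 t \ S, (1 - p i)

noncomputable def QProph (k n : ℕ) (G : ℕ → ℕ → ℝ) (j : ℕ) : ℝ :=
  eMinBer (fun i => G i j) n k

noncomputable def QExAnte (k n : ℕ) (G : ℕ → ℕ → ℝ) (j : ℕ) : ℝ :=
  min (∑ i ∈ Finset.Icc 1 n, G i j) (k : ℝ)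

noncomputable def coverSum (k n : ℕ) (G : ℕ → ℕ → ℝ) (j : ℕ) (x y : ℕ → ℕ → ℝ) : ℝ :=
  ∑ i ∈ Finset.Icc 1 n, ∑ l ∈ Finset.Icc 1 k, min (y i l) (G i j * x i l)

/-- `τ_i(J,ρ)`. -/
noncomputable def tauOf (G : ℕ → ℕ → ℝ) (J : ℕ) (ρ : ℝ) (i : ℕ) : ℝ :=
  (1 - ρ) * G i (J-1) + ρ * G i J

/-- The simplified dual LP `innerLP^{OST(J,ρ)/·}_{k,n}(G)` with coefficients `Q`. -/
noncomputable def innerLP_OST (k n m : ℕ) (G : ℕ → ℕ → ℝ) (J : ℕ) (ρ : ℝ) (Q : ℕ → ℝ) : ℝ :=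
  sSup {θ : ℝ | ∃ x y, memP k n x y ∧
    (∀ i ∈ Finset.Icc 1 n, ∀ l ∈ Finset.Icc 1 k, y i l = tauOf G J ρ i * x i l) ∧
    ∀ j ∈ Finset.Icc 1 m, θ * Q j ≤ coverSum k n G j x y}

noncomputable def pmfBer (p : ℕ → ℝ) (t c : ℕ) : ℝ :=
  ∑ S ∈ (Finset.Icc 1 t).powerset.filter (fun S => S.card = c),
    (∏ i ∈ S, p i) * ∏ i ∈ Finset.Icc 1 t \ S, (1 - p i)

lemma icc_succ (t : ℕ) : Finset.Icc 1 (t+1) = insert (t+1) (Finset.Icc 1 t) := by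
  ext z; simp only [Finset.mem_Icc, Finset.mem_insert]; omega

lemma not_mem_icc_succ (t : ℕ) : (t+1) ∉ Finset.Icc 1 t := by
  simp only [Finset.mem_Icc]; omega

lemma pmfBer_zero (p : ℕ → ℝ) (c : ℕ) : pmfBer p 0 c = if c = 0 then 1 else 0 := by
  have h0 : Finset.Icc 1 0 = (∅ : Finset ℕ) := by simp
  simp only [pmfBer, h0, Finset.powerset_empty]
  by_cases hc : c = 0
  · simp [Finset.filter_singleton, hc]
  · rw [if_neg hc, Finset.filter_singleton, if_neg (by simpa using fun h => hc h.symm)]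
    simp

lemma pmfBer_succ (p : ℕ → ℝ) (t c : ℕ) :
    pmfBer p (t+1) c = (1 - p (t+1)) * pmfBer p t c
      + (if c = 0 then 0 else p (t+1) * pmfBer p t (c-1)) := by
  have hnm := not_mem_icc_succ t
  have h1 : pmfBer p (t+1) c = ∑ S ∈ (Finset.Icc 1 (t+1)).powerset,
      (if S.card = c then (∏ i ∈ S, p i) * ∏ i ∈ Finset.Icc 1 (t+1) \ S, (1 - p i) else 0) := by
    rw [pmfBer, Finset.sum_filter]
  have hicc : Finset.Icc 1 (t+1) = insert (t+1) (Finset.Icc 1 t) := icc_succ t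
  rw [h1, hicc, Finset.sum_powerset_insert hnm]
  congr 1
  · rw [pmfBer, Finset.sum_filter, Finset.mul_sum]
    refine Finset.sum_congr rfl (fun S hS => ?_)
    rw [Finset.mem_powerset] at hS
    have hS' : (t+1) ∉ S := fun h => hnm (hS h)
    have hdiff : insert (t+1) (Finset.Icc 1 t) \ S = insert (t+1) (Finset.Icc 1 t \ S) := by
      rw [Finset.insert_sdiff_of_notMem _ hS']
    rw [hdiff, Finset.prod_insert (by simp [hnm])]
    by_cases h : S.card = c
    · simp only [if_pos h]; ring
    · simp [h]
  · rcases Nat.eq_zero_or_pos c with hc | hc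
    · subst hc
      rw [if_pos rfl]
      refine Finset.sum_eq_zero (fun S hS => ?_)
      rw [Finset.mem_powerset] at hS
      have hS' : (t+1) ∉ S := fun h => hnm (hS h)
      rw [Finset.card_insert_of_notMem hS']
      simp
    · rw [if_neg (by omega), pmfBer, Finset.sum_filter, Finset.mul_sum]
      refine Finset.sum_congr rfl (fun S hS => ?_)
      rw [Finset.mem_powerset] at hS
      have hS' : (t+1) ∉ S := fun h => hnm (hS h)
      have hc1 : (insert (t+1) S).card = S.card + 1 := Finset.card_insert_of_notMem hS'
      have hdiff : insert (t+1) (Finset.Icc 1 t) \ insert (t+1) S = Finset.Icc 1 t \ S := by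
        ext z
        simp only [Finset.mem_sdiff, Finset.mem_insert, not_or]
        constructor
        · rintro ⟨h1 | h1, h2, h3⟩
          · exact absurd h1 h2
          · exact ⟨h1, h3⟩
        · rintro ⟨h1, h2⟩
          exact ⟨Or.inr h1, fun h => hnm (h ▸ h1), h2⟩
      rw [hdiff, hc1, Finset.prod_insert hS']
      by_cases h : S.card = c - 1
      · rw [if_pos (by omega), if_pos h]; ring
      · rw [if_neg (by omega), if_neg h, mul_zero]

lemma probLt_eq_sum_pmf (p : ℕ → ℝ) (t k : ℕ) :
    probLt p t k = ∑ c ∈ Finset.range k, pmfBer p t c := by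
  unfold probLt pmfBer
  rw [Finset.sum_fiberwise_eq_sum_filter ((Finset.Icc 1 t).powerset) (Finset.range k)
    (fun S => S.card) (fun S => (∏ i ∈ S, p i) * ∏ i ∈ Finset.Icc 1 t \ S, (1 - p i))]
  congr 1
  ext S
  simp [Finset.mem_filter, Finset.mem_range]

lemma eMinBer_zero (p : ℕ → ℝ) (k : ℕ) : eMinBer p 0 k = 0 := by
  have h0 : Finset.Icc 1 0 = (∅ : Finset ℕ) := by simp
  simp [eMinBer, h0]

lemma min_cast_succ (c k : ℕ) :
    min ((c:ℝ)+1) (k:ℝ) = min (c:ℝ) (k:ℝ) + (if c < k then (1:ℝ) else 0) := by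
  by_cases h : c < k
  · rw [if_pos h, min_eq_left (by exact_mod_cast Nat.succ_le_of_lt h),
      min_eq_left (by exact_mod_cast h.le)]
  · push_neg at h
    rw [if_neg (by omega), min_eq_right (by push_cast; linarith [(Nat.cast_le (α := ℝ)).2 h]),
      min_eq_right (by push_cast; linarith [(Nat.cast_le (α := ℝ)).2 h])]
    ring

lemma eMinBer_succ (p : ℕ → ℝ) (t k : ℕ) :
    eMinBer p (t+1) k = eMinBer p t k + p (t+1) * probLt p t k := by
  have hnm := not_mem_icc_succ t
  have hicc : Finset.Icc 1 (t+1) = insert (t+1) (Finset.Icc 1 t) := icc_succ t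
  rw [eMinBer, hicc, Finset.sum_powerset_insert hnm]
  have e1 : ∑ S ∈ (Finset.Icc 1 t).powerset,
      (∏ i ∈ S, p i) * (∏ i ∈ insert (t+1) (Finset.Icc 1 t) \ S, (1 - p i)) * min (S.card : ℝ) k
      = (1 - p (t+1)) * eMinBer p t k := by
    rw [eMinBer, Finset.mul_sum]
    refine Finset.sum_congr rfl (fun S hS => ?_)
    rw [Finset.mem_powerset] at hS
    have hS' : (t+1) ∉ S := fun h => hnm (hS h)
    rw [Finset.insert_sdiff_of_notMem _ hS', Finset.prod_insert (by simp [hnm])]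
    ring
  have e2 : ∑ S ∈ (Finset.Icc 1 t).powerset,
      (∏ i ∈ insert (t+1) S, p i) * (∏ i ∈ insert (t+1) (Finset.Icc 1 t) \ insert (t+1) S, (1 - p i))
        * min ((insert (t+1) S).card : ℝ) k
      = p (t+1) * (eMinBer p t k + probLt p t k) := by
    have eP : probLt p t k = ∑ S ∈ (Finset.Icc 1 t).powerset,
        (∏ i ∈ S, p i) * (∏ i ∈ Finset.Icc 1 t \ S, (1 - p i)) * (if S.card < k then (1:ℝ) else 0) := by
      rw [probLt, Finset.sum_filter]
      refine Finset.sum_congr rfl (fun S hS => ?_)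
      by_cases h : S.card < k
      · simp [h]
      · simp [h]
    rw [eMinBer, eP, ← Finset.sum_add_distrib, Finset.mul_sum]
    refine Finset.sum_congr rfl (fun S hS => ?_)
    rw [Finset.mem_powerset] at hS
    have hS' : (t+1) ∉ S := fun h => hnm (hS h)
    have hdiff : insert (t+1) (Finset.Icc 1 t) \ insert (t+1) S = Finset.Icc 1 t \ S := by
      ext z
      simp only [Finset.mem_sdiff, Finset.mem_insert, not_or]
      constructor
      · rintro ⟨h1 | h1, h2, h3⟩
        · exact absurd h1 h2
        · exact ⟨h1, h3⟩
      · rintro ⟨h1, h2⟩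
        exact ⟨Or.inr h1, fun h => hnm (h ▸ h1), h2⟩
    rw [hdiff, Finset.prod_insert hS', Finset.card_insert_of_notMem hS']
    push_cast
    rw [min_cast_succ]
    ring
  rw [e1, e2]
  ring

lemma eMinBer_eq_sum (p : ℕ → ℝ) (t k : ℕ) :
    eMinBer p t k = ∑ i ∈ Finset.Icc 1 t, p i * probLt p (i-1) k := by
  induction t with
  | zero => simp [eMinBer_zero]
  | succ t ih =>
      rw [eMinBer_succ, ih, icc_succ, Finset.sum_insert (not_mem_icc_succ t)]
      simp only [Nat.add_sub_cancel]
      ring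

lemma probLt_zeros (p : ℕ → ℝ) (t k : ℕ) (hk : 0 < k) (h : ∀ i ∈ Finset.Icc 1 t, p i = 0) :
    probLt p t k = 1 := by
  rw [probLt]
  rw [Finset.sum_eq_single_of_mem (∅ : Finset ℕ)
    (by simp [Finset.mem_filter, Finset.mem_powerset, hk])]
  · rw [Finset.prod_empty, Finset.sdiff_empty, one_mul]
    exact Finset.prod_eq_one (fun i hi => by rw [h i hi]; ring)
  · intro S hS hSne
    obtain ⟨i, hi⟩ := Finset.nonempty_iff_ne_empty.2 hSne
    have hiIcc : i ∈ Finset.Icc 1 t := (Finset.mem_powerset.1 (Finset.mem_filter.1 hS).1) hi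
    rw [Finset.prod_eq_zero hi (h i hiIcc), zero_mul]

lemma probLt_ones (p : ℕ → ℝ) (t k : ℕ) (h : ∀ i ∈ Finset.Icc 1 t, p i = 1) :
    probLt p t k = if t < k then 1 else 0 := by
  have hcard : (Finset.Icc 1 t).card = t := by rw [Nat.card_Icc]; omega
  have hzero : ∀ S ∈ (Finset.Icc 1 t).powerset.filter (fun S => S.card < k),
      S ≠ Finset.Icc 1 t →
      (∏ i ∈ S, p i) * ∏ i ∈ Finset.Icc 1 t \ S, (1 - p i) = 0 := by
    intro S hS hne
    rw [Finset.mem_filter, Finset.mem_powerset] at hS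
    have : (Finset.Icc 1 t \ S).Nonempty := by
      rw [Finset.sdiff_nonempty]
      intro hsub
      exact hne (Finset.Subset.antisymm hS.1 hsub)
    obtain ⟨i, hi⟩ := this
    have hiIcc : i ∈ Finset.Icc 1 t := (Finset.mem_sdiff.1 hi).1
    rw [Finset.prod_eq_zero hi (by rw [h i hiIcc]; ring), mul_zero]
  by_cases ht : t < k
  · rw [if_pos ht, probLt]
    rw [Finset.sum_eq_single_of_mem (Finset.Icc 1 t)
      (by simp [Finset.mem_filter, Finset.mem_powerset, hcard, ht])]
    · rw [Finset.sdiff_self, Finset.prod_empty, mul_one]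
      exact Finset.prod_eq_one h
    · exact fun S hS hne => hzero S hS hne
  · rw [if_neg ht, probLt]
    refine Finset.sum_eq_zero (fun S hS => ?_)
    refine hzero S hS (fun hEq => ?_)
    have := (Finset.mem_filter.1 hS).2
    rw [hEq, hcard] at this
    omega

lemma eMinBer_ones (p : ℕ → ℝ) (t k : ℕ) (h : ∀ i ∈ Finset.Icc 1 t, p i = 1) :
    eMinBer p t k = min (t:ℝ) (k:ℝ) := by
  induction t with
  | zero => simp [eMinBer_zero]
  | succ t ih =>
      have hsub : ∀ i ∈ Finset.Icc 1 t, p i = 1 := fun i hi => h i (by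
        simp only [Finset.mem_Icc] at hi ⊢; omega)
      rw [eMinBer_succ, ih hsub, probLt_ones p t k hsub,
        h (t+1) (by simp only [Finset.mem_Icc]; omega)]
      push_cast
      rw [min_cast_succ t k]
      ring

lemma eMinBer_zeros (p : ℕ → ℝ) (t k : ℕ) (h : ∀ i ∈ Finset.Icc 1 t, p i = 0) :
    eMinBer p t k = 0 := by
  induction t with
  | zero => simp [eMinBer_zero]
  | succ t ih =>
      have hsub : ∀ i ∈ Finset.Icc 1 t, p i = 0 := fun i hi => h i (by
        simp only [Finset.mem_Icc] at hi ⊢; omega)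
      rw [eMinBer_succ, ih hsub, h (t+1) (by simp only [Finset.mem_Icc]; omega)]
      ring

lemma probLt_nonneg (p : ℕ → ℝ) (t k : ℕ) (h : ∀ i ∈ Finset.Icc 1 t, 0 ≤ p i ∧ p i ≤ 1) :
    0 ≤ probLt p t k := by
  refine Finset.sum_nonneg (fun S hS => ?_)
  rw [Finset.mem_filter, Finset.mem_powerset] at hS
  refine mul_nonneg (Finset.prod_nonneg fun i hi => (h i (hS.1 hi)).1)
    (Finset.prod_nonneg fun i hi => ?_)
  have := (h i (Finset.mem_sdiff.1 hi).1).2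
  linarith

lemma probLt_le_one (p : ℕ → ℝ) (t k : ℕ) (h : ∀ i ∈ Finset.Icc 1 t, 0 ≤ p i ∧ p i ≤ 1) :
    probLt p t k ≤ 1 := by
  have h1 : probLt p t k ≤ ∑ S ∈ (Finset.Icc 1 t).powerset,
      (∏ i ∈ S, p i) * ∏ i ∈ Finset.Icc 1 t \ S, (1 - p i) := by
    refine Finset.sum_le_sum_of_subset_of_nonneg (Finset.filter_subset _ _) (fun S hS _ => ?_)
    rw [Finset.mem_powerset] at hS
    refine mul_nonneg (Finset.prod_nonneg fun i hi => (h i (hS hi)).1)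
      (Finset.prod_nonneg fun i hi => ?_)
    have := (h i (Finset.mem_sdiff.1 hi).1).2
    linarith
  have h2 : ∑ S ∈ (Finset.Icc 1 t).powerset,
      (∏ i ∈ S, p i) * ∏ i ∈ Finset.Icc 1 t \ S, (1 - p i) = 1 := by
    rw [← Finset.prod_add p (fun i => 1 - p i) (Finset.Icc 1 t)]
    exact Finset.prod_eq_one (fun i _ => by ring)
  linarith

lemma eMinBer_nonneg (p : ℕ → ℝ) (t k : ℕ) (h : ∀ i ∈ Finset.Icc 1 t, 0 ≤ p i ∧ p i ≤ 1) :
    0 ≤ eMinBer p t k := by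
  refine Finset.sum_nonneg (fun S hS => ?_)
  rw [Finset.mem_powerset] at hS
  refine mul_nonneg (mul_nonneg (Finset.prod_nonneg fun i hi => (h i (hS hi)).1)
    (Finset.prod_nonneg fun i hi => ?_)) (le_min (by positivity) (by positivity))
  have := (h i (Finset.mem_sdiff.1 hi).1).2
  linarith

lemma probLt_congr (p q : ℕ → ℝ) (t k : ℕ) (h : ∀ i ∈ Finset.Icc 1 t, p i = q i) :
    probLt p t k = probLt q t k := by
  refine Finset.sum_congr rfl (fun S hS => ?_)
  rw [Finset.mem_filter, Finset.mem_powerset] at hS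
  congr 1
  · exact Finset.prod_congr rfl (fun i hi => h i (hS.1 hi))
  · exact Finset.prod_congr rfl (fun i hi => by rw [h i (Finset.mem_sdiff.1 hi).1])

lemma eMinBer_congr (p q : ℕ → ℝ) (t k : ℕ) (h : ∀ i ∈ Finset.Icc 1 t, p i = q i) :
    eMinBer p t k = eMinBer q t k := by
  refine Finset.sum_congr rfl (fun S hS => ?_)
  rw [Finset.mem_powerset] at hS
  congr 2
  · exact Finset.prod_congr rfl (fun i hi => h i (hS hi))
  · exact Finset.prod_congr rfl (fun i hi => by rw [h i (Finset.mem_sdiff.1 hi).1])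

lemma x_eq_pmf (k n : ℕ) (hk : 1 ≤ k) (x y : ℕ → ℕ → ℝ) (τ : ℕ → ℝ)
    (hP : memP k n x y)
    (hy : ∀ i ∈ Finset.Icc 1 n, ∀ l ∈ Finset.Icc 1 k, y i l = τ i * x i l) :
    ∀ i, 1 ≤ i → i ≤ n → ∀ l, 1 ≤ l → l ≤ k → x i l = pmfBer τ (i-1) (k-l) := by
  obtain ⟨h1k, h1l, hrec, hbnd⟩ := hP
  intro i hi1
  induction i, hi1 using Nat.le_induction with
  | base =>
      intro _ l hl1 hlk
      rcases Nat.lt_or_ge l k with hl | hl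
      · rw [h1l l hl1 hl, pmfBer_zero, if_neg (by omega)]
      · have hlk' : l = k := by omega
        subst hlk'
        rw [h1k, pmfBer_zero, if_pos (by omega)]
  | succ i hi ih =>
      intro hin l hl1 hlk
      have hin' : i ≤ n := by omega
      have hIH := ih hin'
      have hrec' := hrec (i+1) (by simp only [Finset.mem_Icc]; omega) l
        (by simp only [Finset.mem_Icc]; omega)
      simp only [Nat.add_sub_cancel] at hrec'
      have hyil : y i l = τ i * x i l := hy i (by simp only [Finset.mem_Icc]; omega) l
        (by simp only [Finset.mem_Icc]; omega)
      have hxi : x i l = pmfBer τ (i-1) (k-l) := hIH l hl1 hlk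
      have hstep : pmfBer τ i (k-l) = (1 - τ i) * pmfBer τ (i-1) (k-l)
          + (if k-l = 0 then 0 else τ i * pmfBer τ (i-1) (k-l-1)) := by
        have : i = (i-1) + 1 := by omega
        rw [this, pmfBer_succ]
        rw [← this]
      simp only [Nat.add_sub_cancel]
      rcases Nat.lt_or_ge l k with hl | hl
      · have hy2 : y i (l+1) = τ i * x i (l+1) := hy i (by simp only [Finset.mem_Icc]; omega)
          (l+1) (by simp only [Finset.mem_Icc]; omega)
        have hx2 : x i (l+1) = pmfBer τ (i-1) (k-(l+1)) := hIH (l+1) (by omega) (by omega)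
        rw [hrec', if_pos hl, hyil, hy2, hxi, hx2, hstep, if_neg (by omega)]
        have : k - (l+1) = k - l - 1 := by omega
        rw [this]
        ring
      · have hlk' : l = k := by omega
        subst hlk'
        rw [hrec', if_neg (by omega), hyil, hxi, hstep, if_pos (by omega)]
        ring

lemma sum_x_eq (k n : ℕ) (hk : 1 ≤ k) (x y : ℕ → ℕ → ℝ) (τ : ℕ → ℝ)
    (hP : memP k n x y)
    (hy : ∀ i ∈ Finset.Icc 1 n, ∀ l ∈ Finset.Icc 1 k, y i l = τ i * x i l) :
    ∀ i, 1 ≤ i → i ≤ n → ∑ l ∈ Finset.Icc 1 k, x i l = probLt τ (i-1) k := by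
  intro i hi1 hin
  have hx := x_eq_pmf k n hk x y τ hP hy i hi1 hin
  rw [Finset.sum_congr rfl (fun l hl => hx l (Finset.mem_Icc.1 hl).1 (Finset.mem_Icc.1 hl).2),
    probLt_eq_sum_pmf]
  refine Finset.sum_nbij' (fun l => k - l) (fun c => k - c) ?_ ?_ ?_ ?_ ?_
  · intro l hl; simp only [Finset.mem_Icc] at hl; simp only [Finset.mem_range]; omega
  · intro c hc; simp only [Finset.mem_range] at hc; simp only [Finset.mem_Icc]; omega
  · intro l hl; simp only [Finset.mem_Icc] at hl; omega
  · intro c hc; simp only [Finset.mem_range] at hc; omega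
  · intro l _; rfl

lemma coverSum_eq (k n : ℕ) (hk : 1 ≤ k) (Gg : ℕ → ℕ → ℝ) (j : ℕ) (x y : ℕ → ℕ → ℝ)
    (τ : ℕ → ℝ) (hP : memP k n x y)
    (hy : ∀ i ∈ Finset.Icc 1 n, ∀ l ∈ Finset.Icc 1 k, y i l = τ i * x i l) :
    coverSum k n Gg j x y = ∑ i ∈ Finset.Icc 1 n, min (τ i) (Gg i j) * probLt τ (i-1) k := by
  rw [coverSum]
  refine Finset.sum_congr rfl (fun i hi => ?_)
  have hmem := Finset.mem_Icc.1 hi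
  have hrow : ∀ l ∈ Finset.Icc 1 k, min (y i l) (Gg i j * x i l) = min (τ i) (Gg i j) * x i l := by
    intro l hl
    have hxnn : 0 ≤ x i l := le_trans (hP.2.2.2 i hi l hl).1 (hP.2.2.2 i hi l hl).2
    rw [hy i hi l hl, min_mul_of_nonneg _ _ hxnn]
  rw [Finset.sum_congr rfl hrow, ← Finset.mul_sum,
    sum_x_eq k n hk x y τ hP hy i hmem.1 hmem.2]

lemma G_mono {n m : ℕ} {G : ℕ → ℕ → ℝ} (hG : IsTypeDist n m G) {i : ℕ}
    (hi : i ∈ Finset.Icc 1 n) : ∀ j' ≤ m, ∀ j ≤ j', G i j ≤ G i j' := by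
  intro j' hj'
  induction j' with
  | zero => intro j hj; interval_cases j; exact le_refl _
  | succ j' ih =>
      intro j hj
      rcases Nat.eq_or_lt_of_le hj with h | h
      · rw [h]
      · refine le_trans (ih (by omega) j (by omega)) ?_
        have := (hG i hi).2.2 (j'+1) (by simp only [Finset.mem_Icc]; omega)
        simpa using this

lemma G_bounds {n m : ℕ} {G : ℕ → ℕ → ℝ} (hG : IsTypeDist n m G) {i : ℕ}
    (hi : i ∈ Finset.Icc 1 n) {j : ℕ} (hj : j ≤ m) : 0 ≤ G i j ∧ G i j ≤ 1 := by
  constructor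
  · have := G_mono hG hi j hj 0 (by omega)
    rw [(hG i hi).1] at this; exact this
  · have := G_mono hG hi m (le_refl m) j hj
    rw [(hG i hi).2.1] at this; exact this

lemma tau_bounds {n m : ℕ} {G : ℕ → ℕ → ℝ} (hG : IsTypeDist n m G) {i : ℕ}
    (hi : i ∈ Finset.Icc 1 n) {J : ℕ} (hJ1 : 1 ≤ J) (hJm : J ≤ m) {ρ : ℝ}
    (hρ : ρ ∈ Set.Ioc (0:ℝ) 1) : 0 ≤ tauOf G J ρ i ∧ tauOf G J ρ i ≤ 1 := by
  obtain ⟨hρ0, hρ1⟩ := hρ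
  have h1 := G_bounds hG hi (j := J-1) (by omega)
  have h2 := G_bounds hG hi (j := J) hJm
  rw [tauOf]
  constructor
  · have := mul_nonneg (by linarith : (0:ℝ) ≤ 1 - ρ) h1.1
    have := mul_nonneg hρ0.le h2.1
    linarith
  · nlinarith [h1.2, h2.2]

/-- The modified instance: insert a dummy bottom type `1` and dummy top type `m+2` (with zero
probability for agents `1..n-1`), and give agent `n` the bottom type w.p. `a` and the top type
w.p. `1-a`. -/
noncomputable def Gext (n m : ℕ) (G : ℕ → ℕ → ℝ) (a : ℝ) (i j : ℕ) : ℝ :=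
  if j = 0 then 0
  else if j = m + 2 then 1
  else if i = n then a
  else G i (j - 1)

lemma Gext_zero (n m : ℕ) (G : ℕ → ℕ → ℝ) (a : ℝ) (i : ℕ) : Gext n m G a i 0 = 0 := by
  rw [Gext, if_pos rfl]

lemma Gext_top (n m : ℕ) (G : ℕ → ℕ → ℝ) (a : ℝ) (i : ℕ) : Gext n m G a i (m+2) = 1 := by
  rw [Gext, if_neg (by omega), if_pos rfl]

lemma Gext_n (n m : ℕ) (G : ℕ → ℕ → ℝ) (a : ℝ) {j : ℕ} (hj1 : 1 ≤ j) (hj : j ≤ m+1) :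
    Gext n m G a n j = a := by
  rw [Gext, if_neg (by omega), if_neg (by omega), if_pos rfl]

lemma Gext_lt (n m : ℕ) (G : ℕ → ℕ → ℝ) (a : ℝ) {i j : ℕ} (hin : i ≠ n) (hj1 : 1 ≤ j)
    (hj : j ≤ m+1) : Gext n m G a i j = G i (j-1) := by
  rw [Gext, if_neg (by omega), if_neg (by omega), if_neg hin]

lemma Gext_isTypeDist {n m : ℕ} {G : ℕ → ℕ → ℝ} (hG : IsTypeDist n m G) (hm : 1 ≤ m)
    {a : ℝ} (ha0 : 0 ≤ a) (ha1 : a ≤ 1) : IsTypeDist n (m+2) (Gext n m G a) := by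
  intro i hi
  refine ⟨Gext_zero n m G a i, Gext_top n m G a i, ?_⟩
  intro j hj
  rw [Finset.mem_Icc] at hj
  by_cases hin : i = n
  · rw [hin]
    rcases Nat.eq_or_lt_of_le hj.1 with h1 | h1
    · rw [← h1]
      norm_num [Gext_zero, Gext_n n m G a (le_refl 1) (by omega : 1 ≤ m + 1), ha0]
    · by_cases h2 : j = m + 2
      · rw [h2]
        have h3 : m + 2 - 1 = m + 1 := by omega
        rw [h3, Gext_top, Gext_n n m G a (by omega) (le_refl (m+1))]
        exact ha1
      · rw [Gext_n n m G a (by omega : 1 ≤ j - 1) (by omega : j - 1 ≤ m + 1),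
          Gext_n n m G a (by omega : 1 ≤ j) (by omega : j ≤ m + 1)]
  · rcases Nat.eq_or_lt_of_le hj.1 with h1 | h1
    · rw [← h1, Gext_zero, Gext_lt n m G a hin (le_refl 1) (by omega)]
      norm_num
      rw [(hG i hi).1]
    · by_cases h2 : j = m + 2
      · rw [h2]
        have h3 : m + 2 - 1 = m + 1 := by omega
        rw [h3, Gext_top, Gext_lt n m G a hin (by omega) (le_refl (m+1))]
        have h4 : m + 1 - 1 = m := by omega
        rw [h4, (hG i hi).2.1]
      · rw [Gext_lt n m G a hin (by omega : 1 ≤ j - 1) (by omega : j - 1 ≤ m + 1),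
          Gext_lt n m G a hin (by omega : 1 ≤ j) (by omega : j ≤ m + 1)]
        exact (hG i hi).2.2 (j-1) (by simp only [Finset.mem_Icc]; omega)

lemma key_bound (k n m : ℕ) (hk : 1 ≤ k) (hkn : k < n) (hm : 1 ≤ m) (G : ℕ → ℕ → ℝ)
    (hG : IsTypeDist n m G) (a : ℝ) (ha0 : 0 < a) (ha1 : a ≤ 1) (B : ℝ) (hB0 : 0 ≤ B)
    (hBmem : ∀ J, 1 ≤ J → J ≤ m → ∀ ρ : ℝ, ρ ∈ Set.Ioc (0:ℝ) 1 →
      min (probLt (tauOf G J ρ) (n-1) k) (eMinBer (tauOf G J ρ) (n-1) k / k) ≤ B) :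
    sSup {w : ℝ | ∃ J ∈ Finset.Icc 1 (m+2), ∃ ρ ∈ Set.Ioc (0:ℝ) 1,
      w = innerLP_OST k n (m+2) (Gext n m G a) J ρ (QProph k n (Gext n m G a))} ≤ B + a := by
  obtain ⟨n', rfl⟩ : ∃ n', n = n' + 1 := ⟨n - 1, by omega⟩
  simp only [Nat.add_sub_cancel] at hBmem ⊢
  have hkn' : k ≤ n' := by omega
  have hkpos : (0:ℝ) < k := by exact_mod_cast hk
  have hGx := Gext_isTypeDist hG hm ha0.le ha1
  refine Real.sSup_le ?_ (by linarith)
  rintro w ⟨J', hJ', ρ, hρ, rfl⟩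
  rw [Finset.mem_Icc] at hJ'
  rw [innerLP_OST]
  refine Real.sSup_le ?_ (by linarith)
  rintro θ ⟨x, y, hP, hy, hcon⟩
  set τ' := tauOf (Gext (n'+1) m G a) J' ρ with hτ'def
  have hτ'b : ∀ i ∈ Finset.Icc 1 (n'+1), 0 ≤ τ' i ∧ τ' i ≤ 1 :=
    fun i hi => tau_bounds hGx hi hJ'.1 hJ'.2 hρ
  have hτ'b' : ∀ i ∈ Finset.Icc 1 n', 0 ≤ τ' i ∧ τ' i ≤ 1 := by
    intro i hi; rw [Finset.mem_Icc] at hi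
    exact hτ'b i (by simp only [Finset.mem_Icc]; omega)
  -- Q values
  have hQ1 : QProph k (n'+1) (Gext (n'+1) m G a) 1 = a := by
    rw [QProph, eMinBer_succ]
    have hz : ∀ i ∈ Finset.Icc 1 n', Gext (n'+1) m G a i 1 = 0 := by
      intro i hi; rw [Finset.mem_Icc] at hi
      rw [Gext_lt (n'+1) m G a (by omega) (le_refl 1) (by omega)]
      exact (hG i (by simp only [Finset.mem_Icc]; omega)).1
    rw [eMinBer_zeros _ n' k hz, probLt_zeros _ n' k (by omega) hz,
      Gext_n (n'+1) m G a (le_refl 1) (by omega)]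
    ring
  have hQm : QProph k (n'+1) (Gext (n'+1) m G a) (m+1) = (k:ℝ) := by
    rw [QProph, eMinBer_succ]
    have ho : ∀ i ∈ Finset.Icc 1 n', Gext (n'+1) m G a i (m+1) = 1 := by
      intro i hi; rw [Finset.mem_Icc] at hi
      rw [Gext_lt (n'+1) m G a (by omega) (by omega) (le_refl (m+1))]
      have : m + 1 - 1 = m := by omega
      rw [this]
      exact (hG i (by simp only [Finset.mem_Icc]; omega)).2.1
    rw [eMinBer_ones _ n' k ho, probLt_ones _ n' k ho, if_neg (by omega),
      min_eq_right (by exact_mod_cast hkn')]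
    ring
  -- cover sums
  have hcov : ∀ j, coverSum k (n'+1) (Gext (n'+1) m G a) j x y
      = min (τ' (n'+1)) (Gext (n'+1) m G a (n'+1) j) * probLt τ' n' k
        + ∑ i ∈ Finset.Icc 1 n', min (τ' i) (Gext (n'+1) m G a i j) * probLt τ' (i-1) k := by
    intro j
    rw [coverSum_eq k (n'+1) hk _ j x y τ' hP hy,
      Finset.sum_Icc_succ_top (by omega : 1 ≤ n'+1)]
    simp only [Nat.add_sub_cancel]
    ring
  have hc1 := hcon 1 (by simp only [Finset.mem_Icc]; omega)
  have hcm := hcon (m+1) (by simp only [Finset.mem_Icc]; omega)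
  rw [hQ1, hcov 1] at hc1
  rw [hQm, hcov (m+1)] at hcm
  have hGn1 : Gext (n'+1) m G a (n'+1) 1 = a := Gext_n (n'+1) m G a (le_refl 1) (by omega)
  have hGnm : Gext (n'+1) m G a (n'+1) (m+1) = a := Gext_n (n'+1) m G a (by omega) (le_refl (m+1))
  have hzero1 : ∀ i ∈ Finset.Icc 1 n',
      min (τ' i) (Gext (n'+1) m G a i 1) * probLt τ' (i-1) k = 0 := by
    intro i hi; rw [Finset.mem_Icc] at hi
    rw [Gext_lt (n'+1) m G a (by omega) (le_refl 1) (by omega),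
      (hG i (by simp only [Finset.mem_Icc]; omega)).1,
      min_eq_right (hτ'b' i (by simp only [Finset.mem_Icc]; omega)).1, zero_mul]
  rw [hGn1, Finset.sum_eq_zero hzero1, add_zero] at hc1
  have honem : ∀ i ∈ Finset.Icc 1 n',
      min (τ' i) (Gext (n'+1) m G a i (m+1)) * probLt τ' (i-1) k
        = τ' i * probLt τ' (i-1) k := by
    intro i hi; rw [Finset.mem_Icc] at hi
    rw [Gext_lt (n'+1) m G a (by omega) (by omega) (le_refl (m+1))]
    have h1 : m + 1 - 1 = m := by omega
    rw [h1, (hG i (by simp only [Finset.mem_Icc]; omega)).2.1,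
      min_eq_left (hτ'b' i (by simp only [Finset.mem_Icc]; omega)).2]
  rw [hGnm, Finset.sum_congr rfl honem, ← eMinBer_eq_sum] at hcm
  -- case analysis on J'
  have hτ'n : τ' (n'+1) = (1-ρ) * Gext (n'+1) m G a (n'+1) (J'-1)
      + ρ * Gext (n'+1) m G a (n'+1) J' := rfl
  have hP'le : probLt τ' n' k ≤ 1 := probLt_le_one τ' n' k hτ'b'
  have hP'nn : 0 ≤ probLt τ' n' k := probLt_nonneg τ' n' k hτ'b'
  have hminnn : 0 ≤ min (τ' (n'+1)) a :=
    le_min (hτ'b (n'+1) (by simp only [Finset.mem_Icc]; omega)).1 ha0.le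
  have hminle : min (τ' (n'+1)) a ≤ a := min_le_right _ _
  rcases (by omega : J' = 1 ∨ (2 ≤ J' ∧ J' ≤ m+1) ∨ J' = m+2) with h1 | hmid | htop
  · -- J' = 1 : θ ≤ a
    subst h1
    have hτ'z : ∀ i ∈ Finset.Icc 1 n', τ' i = 0 := by
      intro i hi; rw [Finset.mem_Icc] at hi
      rw [hτ'def, tauOf]
      norm_num
      rw [Gext_zero, Gext_lt (n'+1) m G a (by omega) (le_refl 1) (by omega),
        (hG i (by simp only [Finset.mem_Icc]; omega)).1]
      ring
    rw [eMinBer_zeros _ n' k hτ'z] at hcm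
    have : θ * k ≤ a := by
      have h2 : min (τ' (n'+1)) a * probLt τ' n' k ≤ a := by
        calc min (τ' (n'+1)) a * probLt τ' n' k ≤ min (τ' (n'+1)) a * 1 := by
              exact mul_le_mul_of_nonneg_left hP'le hminnn
          _ ≤ a := by rw [mul_one]; exact hminle
      linarith
    have hθa : θ ≤ a / k := (le_div_iff₀ hkpos).2 this
    have : a / k ≤ a := by
      apply div_le_self ha0.le
      exact_mod_cast hk
    linarith
  · -- middle case
    have hJ1 : 1 ≤ J' - 1 := by omega
    have hJm : J' - 1 ≤ m := by omega
    set τ := tauOf G (J'-1) ρ with hτdef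
    have hττ : ∀ i ∈ Finset.Icc 1 n', τ' i = τ i := by
      intro i hi; rw [Finset.mem_Icc] at hi
      rw [hτ'def, hτdef, tauOf, tauOf,
        Gext_lt (n'+1) m G a (by omega) (by omega : 1 ≤ J'-1) (by omega),
        Gext_lt (n'+1) m G a (by omega) (by omega : 1 ≤ J') (by omega)]
    have hτ'na : τ' (n'+1) = a := by
      rw [hτ'n, Gext_n (n'+1) m G a (by omega : 1 ≤ J'-1) (by omega),
        Gext_n (n'+1) m G a (by omega : 1 ≤ J') (by omega)]
      ring
    have hPP : probLt τ' n' k = probLt τ n' k := probLt_congr _ _ n' k hττ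
    have hEE : eMinBer τ' n' k = eMinBer τ n' k := eMinBer_congr _ _ n' k hττ
    rw [hτ'na, min_self, hPP] at hc1
    rw [hτ'na, min_self, hPP, hEE] at hcm
    have hθP : θ ≤ probLt τ n' k := by
      have := (mul_le_mul_iff_of_pos_right ha0).mp (by linarith [hc1] : θ * a ≤ probLt τ n' k * a)
      exact this
    have hPle : probLt τ n' k ≤ 1 := by rw [← hPP]; exact hP'le
    have hθE : θ ≤ (eMinBer τ n' k + a) / k := by
      refine (le_div_iff₀ hkpos).2 ?_
      have : a * probLt τ n' k ≤ a := by
        calc a * probLt τ n' k ≤ a * 1 := mul_le_mul_of_nonneg_left hPle ha0.le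
          _ = a := mul_one a
      linarith
    have hBm := hBmem (J'-1) hJ1 hJm ρ hρ
    rcases le_total (probLt τ n' k) (eMinBer τ n' k / k) with hle | hle
    · have : min (probLt τ n' k) (eMinBer τ n' k / k) = probLt τ n' k := min_eq_left hle
      rw [this] at hBm
      linarith
    · have hmin : min (probLt τ n' k) (eMinBer τ n' k / k) = eMinBer τ n' k / k :=
        min_eq_right hle
      rw [hmin] at hBm
      have hak : a / k ≤ a := div_le_self ha0.le (by exact_mod_cast hk)
      have : (eMinBer τ n' k + a) / k = eMinBer τ n' k / k + a / k := add_div _ _ _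
      linarith
  · -- top case
    subst htop
    have hτ'o : ∀ i ∈ Finset.Icc 1 n', τ' i = 1 := by
      intro i hi; rw [Finset.mem_Icc] at hi
      rw [hτ'def, tauOf, Gext_top,
        Gext_lt (n'+1) m G a (by omega) (by omega : 1 ≤ m+2-1) (by omega)]
      have h2 : m + 2 - 1 - 1 = m := by omega
      rw [h2, (hG i (by simp only [Finset.mem_Icc]; omega)).2.1]
      ring
    have hP0 : probLt τ' n' k = 0 := by
      rw [probLt_ones _ n' k hτ'o, if_neg (by omega)]
    rw [hP0, mul_zero] at hc1
    have hθ0 : θ ≤ 0 := by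
      have := (mul_le_mul_iff_of_pos_right ha0).mp (by linarith [hc1] : θ * a ≤ 0 * a)
      exact this
    linarith

/-- upper bound for OST versus the prophet: the worst-case OST guarantee is at
most the best-possible `min{availability, fill-rate}` bound computed on any fixed `G`. -/
theorem stmt8 (k n : ℕ) (hk : 1 ≤ k) (hkn : k < n) (m : ℕ) (hm : 1 ≤ m)
    (G : ℕ → ℕ → ℝ) (hG : IsTypeDist n m G) :
    sInf {v : ℝ | ∃ m', 1 ≤ m' ∧ ∃ G', IsTypeDist n m' G' ∧
        v = sSup {w : ℝ | ∃ J ∈ Finset.Icc 1 m', ∃ ρ ∈ Set.Ioc (0:ℝ) 1,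
          w = innerLP_OST k n m' G' J ρ (QProph k n G')}}
      ≤ sSup {w : ℝ | ∃ J ∈ Finset.Icc 1 m, ∃ ρ ∈ Set.Ioc (0:ℝ) 1,
          w = min (probLt (tauOf G J ρ) (n-1) k) (eMinBer (tauOf G J ρ) (n-1) k / k)} := by
  have hkpos : (0:ℝ) < k := by exact_mod_cast hk
  have hτb : ∀ J, 1 ≤ J → J ≤ m → ∀ ρ : ℝ, ρ ∈ Set.Ioc (0:ℝ) 1 →
      ∀ i ∈ Finset.Icc 1 (n-1), 0 ≤ tauOf G J ρ i ∧ tauOf G J ρ i ≤ 1 := by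
    intro J hJ1 hJm ρ hρ i hi
    rw [Finset.mem_Icc] at hi
    exact tau_bounds hG (by simp only [Finset.mem_Icc]; omega) hJ1 hJm hρ
  set W := {w : ℝ | ∃ J ∈ Finset.Icc 1 m, ∃ ρ ∈ Set.Ioc (0:ℝ) 1,
      w = min (probLt (tauOf G J ρ) (n-1) k) (eMinBer (tauOf G J ρ) (n-1) k / k)} with hWdef
  set V := {v : ℝ | ∃ m', 1 ≤ m' ∧ ∃ G', IsTypeDist n m' G' ∧
      v = sSup {w : ℝ | ∃ J ∈ Finset.Icc 1 m', ∃ ρ ∈ Set.Ioc (0:ℝ) 1,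
        w = innerLP_OST k n m' G' J ρ (QProph k n G')}} with hVdef
  have hWbdd : BddAbove W := by
    refine ⟨1, ?_⟩
    rintro w ⟨J, hJ, ρ, hρ, rfl⟩
    rw [Finset.mem_Icc] at hJ
    exact le_trans (min_le_left _ _) (probLt_le_one _ _ _ (hτb J hJ.1 hJ.2 ρ hρ))
  have hmemW : min (probLt (tauOf G 1 1) (n-1) k) (eMinBer (tauOf G 1 1) (n-1) k / k) ∈ W :=
    ⟨1, by simp only [Finset.mem_Icc]; omega, 1, ⟨one_pos, le_refl 1⟩, rfl⟩
  have hB0 : 0 ≤ sSup W := by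
    have hb := hτb 1 (le_refl 1) hm 1 ⟨one_pos, le_refl 1⟩
    have h0 : 0 ≤ min (probLt (tauOf G 1 1) (n-1) k) (eMinBer (tauOf G 1 1) (n-1) k / k) :=
      le_min (probLt_nonneg _ _ _ hb) (div_nonneg (eMinBer_nonneg _ _ _ hb) hkpos.le)
    exact le_trans h0 (le_csSup hWbdd hmemW)
  have hBmem : ∀ J, 1 ≤ J → J ≤ m → ∀ ρ : ℝ, ρ ∈ Set.Ioc (0:ℝ) 1 →
      min (probLt (tauOf G J ρ) (n-1) k) (eMinBer (tauOf G J ρ) (n-1) k / k) ≤ sSup W := by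
    intro J hJ1 hJm ρ hρ
    exact le_csSup hWbdd ⟨J, by simp only [Finset.mem_Icc]; omega, ρ, hρ, rfl⟩
  have hstep : ∀ a : ℝ, 0 < a → a ≤ 1 → sInf V ≤ sSup W + a := by
    intro a ha0 ha1
    have hmemV : sSup {w : ℝ | ∃ J ∈ Finset.Icc 1 (m+2), ∃ ρ ∈ Set.Ioc (0:ℝ) 1,
        w = innerLP_OST k n (m+2) (Gext n m G a) J ρ (QProph k n (Gext n m G a))} ∈ V :=
      ⟨m+2, by omega, Gext n m G a, Gext_isTypeDist hG hm ha0.le ha1, rfl⟩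
    by_cases hbb : BddBelow V
    · exact le_trans (csInf_le hbb hmemV)
        (key_bound k n m hk hkn hm G hG a ha0 ha1 (sSup W) hB0 hBmem)
    · rw [Real.sInf_of_not_bddBelow hbb]
      linarith
  by_contra hcon
  push_neg at hcon
  set d := sInf V - sSup W with hd
  have hd0 : 0 < d := by simp only [hd]; linarith
  have := hstep (min (d/2) 1) (lt_min (by linarith) one_pos) (min_le_right _ _)
  have h2 : min (d/2) 1 ≤ d/2 := min_le_left _ _
  simp only [hd] at this h2
  linarith
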